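/- arXiv:2301.12489 — 2 statements merged into one kernel-verified Lean document; each statement's English description precedes it below -/
import Mathlib

section
/- If K₀ ∈ ℝ^{m×n} is a stabilizing feedback gain (i.e., A − BK₀ is Hurwitz), Q = Qᵀ ⪰ 0 with (A, √Q) observable, R = Rᵀ ≻ 0, and for each k ≥ 1 the matrix P_k = P_kᵀ ≻ 0 solves the Lyapunov equation P_k(A − BK_{k−1}) + (A − BK_{k−1})ᵀP_k + Q + K_{k−1}ᵀ R K_{k−1} = 0 with K_k = R⁻¹Bᵀ P_{k−1}, then A − BK_k is Hurwitz for every k. -/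
open Matrix

noncomputable section

/-- A real square matrix is Hurwitz if all its (complex) eigenvalues have negative real part. -/
def Hurwitz {n : ℕ} (M : Matrix (Fin n) (Fin n) ℝ) : Prop :=
  ∀ μ ∈ spectrum ℂ (M.map Complex.ofReal), μ.re < 0

/-- Observability of the pair (A, C) via the Hautus test. -/
def Observable {n p : ℕ} (A : Matrix (Fin n) (Fin n) ℝ) (C : Matrix (Fin p) (Fin n) ℝ) : Prop :=
  ∀ μ : ℂ, (Matrix.fromRows (A.map Complex.ofReal - μ • 1) (C.map Complex.ofReal)).rank = n

namespace KleinmanAux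

lemma map_ofReal_mul {a b c : ℕ} (M : Matrix (Fin a) (Fin b) ℝ) (N : Matrix (Fin b) (Fin c) ℝ) :
    (M * N).map Complex.ofReal = M.map Complex.ofReal * N.map Complex.ofReal :=
  Matrix.map_mul (f := Complex.ofRealHom)

lemma map_ofReal_add {a b : ℕ} (M N : Matrix (Fin a) (Fin b) ℝ) :
    (M + N).map Complex.ofReal = M.map Complex.ofReal + N.map Complex.ofReal := by
  ext i j; simp

lemma map_ofReal_sub {a b : ℕ} (M N : Matrix (Fin a) (Fin b) ℝ) :
    (M - N).map Complex.ofReal = M.map Complex.ofReal - N.map Complex.ofReal := by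
  ext i j; simp

lemma conjT_map {a b : ℕ} (M : Matrix (Fin a) (Fin b) ℝ) :
    (M.map Complex.ofReal)ᴴ = Mᵀ.map Complex.ofReal := by
  ext i j; simp [conjTranspose_apply, Complex.conj_ofReal]

lemma real_conjT {a b : ℕ} (M : Matrix (Fin a) (Fin b) ℝ) : Mᴴ = Mᵀ := by
  ext i j; simp [conjTranspose_apply]

lemma starDot {N : ℕ} (w : Fin N → ℂ) :
    star w ⬝ᵥ w = ((∑ i, Complex.normSq (w i) : ℝ) : ℂ) := by
  simp only [dotProduct, Pi.star_apply, RCLike.star_def, ← Complex.normSq_eq_conj_mul_self]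
  push_cast
  rfl

lemma sumSq_nonneg {N : ℕ} (w : Fin N → ℂ) : 0 ≤ ∑ i, Complex.normSq (w i) :=
  Finset.sum_nonneg fun i _ => Complex.normSq_nonneg _

lemma sumSq_eq_zero {N : ℕ} {w : Fin N → ℂ} (h : ∑ i, Complex.normSq (w i) = 0) : w = 0 := by
  funext i
  exact Complex.normSq_eq_zero.1 ((Finset.sum_eq_zero_iff_of_nonneg
    (fun i _ => Complex.normSq_nonneg (w i))).1 h i (Finset.mem_univ i))

lemma mulVec_ne_zero {N : ℕ} {U : Matrix (Fin N) (Fin N) ℂ} (hdet : U.det ≠ 0)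
    {v : Fin N → ℂ} (hv : v ≠ 0) : U *ᵥ v ≠ 0 := fun h =>
  hdet (Matrix.exists_mulVec_eq_zero_iff.1 ⟨v, hv, h⟩)

lemma quad {a b : ℕ} (X Y : Matrix (Fin a) (Fin b) ℂ) (v : Fin b → ℂ) :
    star v ⬝ᵥ ((Xᴴ * Y) *ᵥ v) = star (X *ᵥ v) ⬝ᵥ (Y *ᵥ v) := by
  rw [star_mulVec, dotProduct_mulVec, ← Matrix.vecMul_vecMul, ← dotProduct_mulVec,
    ← dotProduct_mulVec, mulVec_mulVec]

lemma rank_lt {α : Type} [Fintype α] {N : ℕ} (F : Matrix α (Fin N) ℂ) {v : Fin N → ℂ} (hv : v ≠ 0)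
    (h : F *ᵥ v = 0) : F.rank < N := by
  have hrn := LinearMap.finrank_range_add_finrank_ker F.mulVecLin
  rw [Module.finrank_fin_fun] at hrn
  have hker : 0 < Module.finrank ℂ (LinearMap.ker F.mulVecLin) := by
    have hmem : v ∈ LinearMap.ker F.mulVecLin := by
      simpa [Matrix.mulVecLin_apply] using h
    have : Nontrivial (LinearMap.ker F.mulVecLin) :=
      Submodule.nontrivial_iff_ne_bot.2 fun hb => hv (by simpa [hb] using hmem)
    exact Module.finrank_pos
  have : F.rank = Module.finrank ℂ (LinearMap.range F.mulVecLin) := rfl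
  omega

/-- Complex-side Lyapunov/Hautus argument. -/
lemma complex_side {n m : ℕ}
    (Ac Uc Sc : Matrix (Fin n) (Fin n) ℂ) (Vc : Matrix (Fin m) (Fin m) ℂ)
    (Kc : Matrix (Fin m) (Fin n) ℂ) (Bc : Matrix (Fin n) (Fin m) ℂ)
    (hUdet : Uc.det ≠ 0) (hVdet : Vc.det ≠ 0)
    (hceq : Ucᴴ * Uc * (Ac - Bc * Kc) + (Ac - Bc * Kc)ᴴ * (Ucᴴ * Uc)
      + Scᴴ * Sc + (Vc * Kc)ᴴ * (Vc * Kc) = 0)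
    (hrank : ∀ μ : ℂ, (Matrix.fromRows (Ac - μ • 1) Sc).rank = n)
    (μ : ℂ) (hμ : μ ∈ spectrum ℂ (Ac - Bc * Kc)) : μ.re < 0 := by
  set Mc := Ac - Bc * Kc with hMcdef
  have hdet : (μ • (1 : Matrix (Fin n) (Fin n) ℂ) - Mc).det = 0 := by
    have h1 : ¬IsUnit (algebraMap ℂ (Matrix (Fin n) (Fin n) ℂ) μ - Mc) := spectrum.mem_iff.1 hμ
    rw [Algebra.algebraMap_eq_smul_one] at h1
    by_contra h0
    exact h1 ((Matrix.isUnit_iff_isUnit_det _).2 (isUnit_iff_ne_zero.2 h0))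
  obtain ⟨v, hv, hv0⟩ := Matrix.exists_mulVec_eq_zero_iff.2 hdet
  have hev : Mc *ᵥ v = μ • v := by
    rw [Matrix.sub_mulVec, Matrix.smul_mulVec, Matrix.one_mulVec, sub_eq_zero] at hv0
    exact hv0.symm
  have h0 : star v ⬝ᵥ ((Ucᴴ * Uc * Mc + Mcᴴ * (Ucᴴ * Uc) + Scᴴ * Sc
      + (Vc * Kc)ᴴ * (Vc * Kc)) *ᵥ v) = 0 := by
    rw [hceq]; simp
  have t1 : star v ⬝ᵥ ((Ucᴴ * Uc * Mc) *ᵥ v)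
      = μ * ((∑ i, Complex.normSq ((Uc *ᵥ v) i) : ℝ) : ℂ) := by
    rw [Matrix.mul_assoc, quad, ← Matrix.mulVec_mulVec, hev, Matrix.mulVec_smul,
      dotProduct_smul, starDot, smul_eq_mul]
  have t2 : star v ⬝ᵥ ((Mcᴴ * (Ucᴴ * Uc)) *ᵥ v)
      = (starRingEnd ℂ) μ * ((∑ i, Complex.normSq ((Uc *ᵥ v) i) : ℝ) : ℂ) := by
    have hassoc : Mcᴴ * (Ucᴴ * Uc) = (Uc * Mc)ᴴ * Uc := by
      rw [Matrix.conjTranspose_mul, Matrix.mul_assoc]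
    rw [hassoc, quad, ← Matrix.mulVec_mulVec, hev, Matrix.mulVec_smul, star_smul,
      smul_dotProduct, starDot, smul_eq_mul]
    rfl
  have t3 : star v ⬝ᵥ ((Scᴴ * Sc) *ᵥ v)
      = ((∑ i, Complex.normSq ((Sc *ᵥ v) i) : ℝ) : ℂ) := by
    rw [quad, starDot]
  have t4 : star v ⬝ᵥ (((Vc * Kc)ᴴ * (Vc * Kc)) *ᵥ v)
      = ((∑ i, Complex.normSq ((Vc *ᵥ (Kc *ᵥ v)) i) : ℝ) : ℂ) := by
    rw [quad, ← Matrix.mulVec_mulVec, starDot]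
  set c₀ : ℝ := ∑ i, Complex.normSq ((Uc *ᵥ v) i) with hc₀
  set q₀ : ℝ := ∑ i, Complex.normSq ((Sc *ᵥ v) i) with hq₀
  set r₀ : ℝ := ∑ i, Complex.normSq ((Vc *ᵥ (Kc *ᵥ v)) i) with hr₀
  have hc₀pos : 0 < c₀ := by
    rcases lt_or_eq_of_le (sumSq_nonneg (Uc *ᵥ v)) with h | h
    · exact h
    · exact absurd (sumSq_eq_zero h.symm) (mulVec_ne_zero hUdet hv)
  have hkey : (2 * μ.re * c₀ + q₀ + r₀ : ℝ) = 0 := by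
    have hsum : μ * (c₀ : ℂ) + (starRingEnd ℂ) μ * (c₀ : ℂ) + (q₀ : ℂ) + (r₀ : ℂ) = 0 := by
      rw [← t1, ← t2, ← t3, ← t4, ← h0]
      try simp [Matrix.add_mulVec, dotProduct_add]
    have h2 : ((2 * μ.re * c₀ + q₀ + r₀ : ℝ) : ℂ) = 0 := by
      have hμc : μ + (starRingEnd ℂ) μ = ((2 * μ.re : ℝ) : ℂ) := by
        rw [Complex.add_conj]
      push_cast
      calc ((2:ℂ) * μ.re * c₀ + q₀ + r₀)
          = (μ + (starRingEnd ℂ) μ) * c₀ + q₀ + r₀ := by rw [hμc]; push_cast; ring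
        _ = μ * (c₀ : ℂ) + (starRingEnd ℂ) μ * (c₀ : ℂ) + (q₀ : ℂ) + (r₀ : ℂ) := by ring
        _ = 0 := hsum
    exact_mod_cast h2
  have hq₀n : 0 ≤ q₀ := sumSq_nonneg _
  have hr₀n : 0 ≤ r₀ := sumSq_nonneg _
  by_contra hre
  push_neg at hre
  have hre0 : μ.re = 0 := by nlinarith
  have hq00 : q₀ = 0 := by nlinarith
  have hr00 : r₀ = 0 := by nlinarith
  have hSv : Sc *ᵥ v = 0 := sumSq_eq_zero (hq₀ ▸ hq00)
  have hVKv : Vc *ᵥ (Kc *ᵥ v) = 0 := sumSq_eq_zero (hr₀ ▸ hr00)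
  have hKv : Kc *ᵥ v = 0 := by
    by_contra h
    exact mulVec_ne_zero hVdet h hVKv
  have hAv : (Ac - μ • 1) *ᵥ v = 0 := by
    have h1 : Ac *ᵥ v = μ • v := by
      have h2 := hev
      rw [hMcdef, Matrix.sub_mulVec, ← Matrix.mulVec_mulVec, hKv] at h2
      simpa using h2
    rw [Matrix.sub_mulVec, h1, Matrix.smul_mulVec, Matrix.one_mulVec, sub_self]
  have hF : (Matrix.fromRows (Ac - μ • 1) Sc) *ᵥ v = 0 := by
    rw [Matrix.fromRows_mulVec, hAv, hSv]
    ext (i | i) <;> rfl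
  have hlt := rank_lt _ hv hF
  have hob := hrank μ
  omega

lemma det_map_ne_zero {N : ℕ} {U : Matrix (Fin N) (Fin N) ℝ} (h : U.det ≠ 0) :
    (U.map Complex.ofReal).det ≠ 0 := by
  rw [show U.map Complex.ofReal = Complex.ofRealHom.mapMatrix U from rfl, ← RingHom.map_det]
  simpa using h

lemma sq_factor_det_ne_zero {N : ℕ} {P U : Matrix (Fin N) (Fin N) ℝ} (hP : P.PosDef)
    (hU : P = Uᴴ * U) : U.det ≠ 0 := by
  have h1 : (0:ℝ) < P.det := hP.det_pos
  rw [hU] at h1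
  simp only [Matrix.det_mul, Matrix.det_conjTranspose] at h1
  intro h0
  rw [h0] at h1
  simp at h1

/-- The core Lyapunov lemma over ℝ. -/
lemma lyap_hurwitz {n m : ℕ}
    (A : Matrix (Fin n) (Fin n) ℝ) (B : Matrix (Fin n) (Fin m) ℝ)
    (Q sqrtQ : Matrix (Fin n) (Fin n) ℝ) (R : Matrix (Fin m) (Fin m) ℝ)
    (Kk : Matrix (Fin m) (Fin n) ℝ) (Pk : Matrix (Fin n) (Fin n) ℝ)
    (hsqrt : sqrtQᵀ * sqrtQ = Q)
    (hobs : Observable A sqrtQ)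
    (hR : R.PosDef)
    (hPpos : Pk.PosDef)
    (heq : Pk * (A - B * Kk) + (A - B * Kk)ᵀ * Pk + Q + Kkᵀ * R * Kk = 0) :
    Hurwitz (A - B * Kk) := by
  intro μ hμ
  obtain ⟨U, hU⟩ : ∃ U, Pk = Uᴴ * U := by
    open scoped MatrixOrder in exact CStarAlgebra.nonneg_iff_eq_star_mul_self.mp hPpos.posSemidef.nonneg
  obtain ⟨V, hV⟩ : ∃ V, R = Vᴴ * V := by
    open scoped MatrixOrder in exact CStarAlgebra.nonneg_iff_eq_star_mul_self.mp hR.posSemidef.nonneg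
  have hdetU : U.det ≠ 0 := sq_factor_det_ne_zero hPpos hU
  have hdetV : V.det ≠ 0 := sq_factor_det_ne_zero hR hV
  have hMc : (A - B * Kk).map Complex.ofReal
      = A.map Complex.ofReal - B.map Complex.ofReal * Kk.map Complex.ofReal := by
    rw [map_ofReal_sub, map_ofReal_mul]
  have hPc : Pk.map Complex.ofReal
      = (U.map Complex.ofReal)ᴴ * U.map Complex.ofReal := by
    rw [hU, real_conjT, map_ofReal_mul, ← conjT_map]
  have hQc : Q.map Complex.ofReal
      = (sqrtQ.map Complex.ofReal)ᴴ * sqrtQ.map Complex.ofReal := by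
    rw [← hsqrt, map_ofReal_mul, ← conjT_map]
  have hKRK : (Kkᵀ * R * Kk).map Complex.ofReal
      = (V.map Complex.ofReal * Kk.map Complex.ofReal)ᴴ
        * (V.map Complex.ofReal * Kk.map Complex.ofReal) := by
    have hreal : Kkᵀ * R * Kk = (V * Kk)ᵀ * (V * Kk) := by
      rw [hV, real_conjT, Matrix.transpose_mul]
      rw [Matrix.mul_assoc, Matrix.mul_assoc, Matrix.mul_assoc]
    rw [hreal, map_ofReal_mul, ← conjT_map, map_ofReal_mul]
  have hMcH : ((A - B * Kk)ᵀ).map Complex.ofReal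
      = (A.map Complex.ofReal - B.map Complex.ofReal * Kk.map Complex.ofReal)ᴴ := by
    rw [← conjT_map, hMc]
  have hceq : (U.map Complex.ofReal)ᴴ * U.map Complex.ofReal
        * (A.map Complex.ofReal - B.map Complex.ofReal * Kk.map Complex.ofReal)
      + (A.map Complex.ofReal - B.map Complex.ofReal * Kk.map Complex.ofReal)ᴴ
        * ((U.map Complex.ofReal)ᴴ * U.map Complex.ofReal)
      + (sqrtQ.map Complex.ofReal)ᴴ * sqrtQ.map Complex.ofReal
      + (V.map Complex.ofReal * Kk.map Complex.ofReal)ᴴ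
        * (V.map Complex.ofReal * Kk.map Complex.ofReal) = 0 := by
    have hmap := congrArg (fun X => X.map Complex.ofReal) heq
    rw [map_ofReal_add, map_ofReal_add, map_ofReal_add, hKRK, hQc, map_ofReal_mul,
      map_ofReal_mul, hPc, hMc, hMcH, Matrix.map_zero _ Complex.ofReal_zero] at hmap
    exact hmap
  exact complex_side (A.map Complex.ofReal) (U.map Complex.ofReal) (sqrtQ.map Complex.ofReal)
    (V.map Complex.ofReal) (Kk.map Complex.ofReal) (B.map Complex.ofReal)
    (det_map_ne_zero hdetU) (det_map_ne_zero hdetV) hceq hobs μ (by rwa [hMc] at hμ)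

end KleinmanAux

theorem kleinman_hurwitz {n m : ℕ}
    (A : Matrix (Fin n) (Fin n) ℝ) (B : Matrix (Fin n) (Fin m) ℝ)
    (Q sqrtQ : Matrix (Fin n) (Fin n) ℝ) (R : Matrix (Fin m) (Fin m) ℝ)
    (K : ℕ → Matrix (Fin m) (Fin n) ℝ) (P : ℕ → Matrix (Fin n) (Fin n) ℝ)
    (hstab : ∃ K₀ : Matrix (Fin m) (Fin n) ℝ, Hurwitz (A - B * K₀))
    (hQ : Q.PosSemidef) (hsqrt : sqrtQᵀ * sqrtQ = Q)
    (hobs : Observable A sqrtQ)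
    (hR : R.PosDef)
    (hK0 : Hurwitz (A - B * K 0))
    (hP : ∀ k, 1 ≤ k → (P k).PosDef ∧
      P k * (A - B * K (k - 1)) + (A - B * K (k - 1))ᵀ * P k
        + Q + (K (k - 1))ᵀ * R * K (k - 1) = 0)
    (hK : ∀ k, 1 ≤ k → K k = R⁻¹ * Bᵀ * P (k - 1)) :
    ∀ k, Hurwitz (A - B * K k) := by
  intro k
  obtain ⟨hpos, heq⟩ := hP (k + 1) (by omega)
  simp only [Nat.add_sub_cancel] at hpos heq
  exact KleinmanAux.lyap_hurwitz A B Q sqrtQ R (K k) (P (k + 1)) hsqrt hobs hR hpos heq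
end
end

section
/- If rank([A − λI, B; C, 0]) = n + p for every eigenvalue λ of E, then for any D ∈ ℝ^{n×q} and F ∈ ℝ^{p×q} the regulator equations XE = AX + BU + D and 0 = CX + F admit a solution pair (X, U) with X ∈ ℝ^{n×q}, U ∈ ℝ^{m×q}. -/
open Matrix

noncomputable section

theorem regulator_equations_solvable {n m p q : ℕ}
    (A : Matrix (Fin n) (Fin n) ℝ) (B : Matrix (Fin n) (Fin m) ℝ)
    (C : Matrix (Fin p) (Fin n) ℝ) (E : Matrix (Fin q) (Fin q) ℝ)
    (hrank : ∀ μ ∈ spectrum ℂ (E.map Complex.ofReal),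
      (Matrix.fromBlocks (A.map Complex.ofReal - μ • 1) (B.map Complex.ofReal)
        (C.map Complex.ofReal) 0).rank = n + p) :
    ∀ (D : Matrix (Fin n) (Fin q) ℝ) (F : Matrix (Fin p) (Fin q) ℝ),
      ∃ (X : Matrix (Fin n) (Fin q) ℝ) (U : Matrix (Fin m) (Fin q) ℝ),
        X * E = A * X + B * U + D ∧ (0 : Matrix (Fin p) (Fin q) ℝ) = C * X + F := by
  intro D F
  classical
  set Ac : Matrix (Fin n) (Fin n) ℂ := A.map Complex.ofReal with hAcdef
  set Bc : Matrix (Fin n) (Fin m) ℂ := B.map Complex.ofReal with hBcdef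
  set Cc : Matrix (Fin p) (Fin n) ℂ := C.map Complex.ofReal with hCcdef
  set Ec : Matrix (Fin q) (Fin q) ℂ := E.map Complex.ofReal with hEcdef
  set G : Matrix (Fin n ⊕ Fin p) (Fin n ⊕ Fin m) ℂ := fromBlocks Ac Bc Cc 0 with hGdef
  set H : Matrix (Fin n ⊕ Fin p) (Fin n ⊕ Fin m) ℂ := fromBlocks 1 0 0 0 with hHdef
  have hGH : ∀ μ : ℂ, G - μ • H = fromBlocks (Ac - μ • 1) Bc Cc 0 := by
    intro μ
    ext i j
    rcases i with i | i <;> rcases j with j | j <;>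
      simp [hGdef, hHdef, Matrix.fromBlocks, Matrix.sub_apply, Matrix.smul_apply]
  -- injectivity of the transpose of a full-row-rank matrix
  have injLemma : ∀ (M : Matrix (Fin n ⊕ Fin p) (Fin n ⊕ Fin m) ℂ),
      M.rank = n + p → ∀ x : (Fin n ⊕ Fin p) → ℂ, Mᵀ *ᵥ x = 0 → x = 0 := by
    intro M hM x hx
    have hrk : (Mᵀ).rank = n + p := by rw [Matrix.rank_transpose]; exact hM
    have hdim : Module.finrank ℂ ((Fin n ⊕ Fin p) → ℂ) = n + p := by
      rw [Module.finrank_fintype_fun_eq_card]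
      simp
    have h1 := LinearMap.finrank_range_add_finrank_ker (Mᵀ).mulVecLin
    rw [hdim] at h1
    have h2 : (Mᵀ).rank = Module.finrank ℂ (LinearMap.range (Mᵀ).mulVecLin) := rfl
    rw [← h2, hrk] at h1
    have h3 : Module.finrank ℂ (LinearMap.ker (Mᵀ).mulVecLin) = 0 := by omega
    have h4 : LinearMap.ker (Mᵀ).mulVecLin = ⊥ := Submodule.finrank_eq_zero.mp h3
    have h5 : x ∈ LinearMap.ker (Mᵀ).mulVecLin := by
      rw [LinearMap.mem_ker, Matrix.mulVecLin_apply]; exact hx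
    rw [h4, Submodule.mem_bot] at h5
    exact h5
  -- the main linear map
  let Φ : Matrix (Fin n ⊕ Fin m) (Fin q) ℂ →ₗ[ℂ] Matrix (Fin n ⊕ Fin p) (Fin q) ℂ :=
    { toFun := fun W => G * W - H * (W * Ec)
      map_add' := by
        intro W₁ W₂
        simp only [Matrix.mul_add, Matrix.add_mul]
        abel
      map_smul' := by
        intro c W
        simp only [Matrix.mul_smul, Matrix.smul_mul, RingHom.id_apply, smul_sub] }
  have hΦapp : ∀ W, Φ W = G * W - H * (W * Ec) := fun _ => rfl
  -- the endomorphism given by Ecᵀ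
  set f : Module.End ℂ (Fin q → ℂ) := Matrix.toLinAlgEquiv' Ecᵀ with hfdef
  have hf : ∀ v, f v = Ecᵀ *ᵥ v := fun v => rfl
  have hspec : ∀ μ : ℂ, Module.End.HasEigenvalue f μ → μ ∈ spectrum ℂ Ec := by
    intro μ hμ
    have h1 : μ ∈ spectrum ℂ f := Module.End.hasEigenvalue_iff_mem_spectrum.mp hμ
    have h2 : μ ∈ spectrum ℂ (Ecᵀ) := by
      rwa [hfdef, AlgEquiv.spectrum_eq (Matrix.toLinAlgEquiv') Ecᵀ] at h1
    rw [spectrum.mem_iff] at h2 ⊢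
    intro hcon
    apply h2
    have heq : algebraMap ℂ (Matrix (Fin q) (Fin q) ℂ) μ - Ecᵀ
        = (algebraMap ℂ (Matrix (Fin q) (Fin q) ℂ) μ - Ec)ᵀ := by
      rw [Matrix.transpose_sub]
      congr 1
      rw [Algebra.algebraMap_eq_smul_one, Matrix.transpose_smul, Matrix.transpose_one]
    rw [heq, Matrix.isUnit_iff_isUnit_det, Matrix.det_transpose,
      ← Matrix.isUnit_iff_isUnit_det]
    exact hcon
  -- surjectivity of Φ
  have hsurj : Function.Surjective Φ := by
    rw [← LinearMap.dualMap_injective_iff]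
    rw [← LinearMap.ker_eq_bot, LinearMap.ker_eq_bot']
    intro φ hφ0
    set Λ : Matrix (Fin n ⊕ Fin p) (Fin q) ℂ :=
      Matrix.of (fun i j => φ (Matrix.single i j 1)) with hΛdef
    have hφrep : ∀ M : Matrix (Fin n ⊕ Fin p) (Fin q) ℂ, φ M = Matrix.trace (Mᵀ * Λ) := by
      intro M
      have h1 : ∀ (i) (j), φ (Matrix.single i j (M i j)) = M i j * Λ i j := by
        intro i j
        have h2 : Matrix.single i j (M i j) = (M i j) • Matrix.single i j 1 := by
          rw [Matrix.smul_single, smul_eq_mul, mul_one]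
        rw [h2, _root_.map_smul, smul_eq_mul]
        rfl
      calc φ M = φ (∑ i, ∑ j, Matrix.single i j (M i j)) := by
              rw [← Matrix.matrix_eq_sum_single]
        _ = ∑ i, ∑ j, M i j * Λ i j := by
              rw [map_sum]
              refine Finset.sum_congr rfl fun i _ => ?_
              rw [map_sum]
              exact Finset.sum_congr rfl fun j _ => h1 i j
        _ = ∑ j, ∑ i, M i j * Λ i j := Finset.sum_comm
        _ = Matrix.trace (Mᵀ * Λ) := by
              simp [Matrix.trace, Matrix.diag, Matrix.mul_apply]
    have hker : ∀ W : Matrix (Fin n ⊕ Fin m) (Fin q) ℂ, Matrix.trace ((G * W - H * (W * Ec))ᵀ * Λ) = 0 := by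
      intro W
      have h2 : Φ.dualMap φ W = 0 := by rw [hφ0]; rfl
      rw [LinearMap.dualMap_apply] at h2
      rw [← hφrep]
      exact h2
    have htr : ∀ W : Matrix (Fin n ⊕ Fin m) (Fin q) ℂ,
        Matrix.trace (Wᵀ * (Gᵀ * Λ - Hᵀ * (Λ * Ecᵀ))) = 0 := by
      intro W
      have h4 : Matrix.trace ((G * W - H * (W * Ec))ᵀ * Λ)
          = Matrix.trace (Wᵀ * (Gᵀ * Λ)) - Matrix.trace (Wᵀ * (Hᵀ * (Λ * Ecᵀ))) := by
        rw [Matrix.transpose_sub, Matrix.sub_mul, Matrix.trace_sub, Matrix.transpose_mul,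
          Matrix.transpose_mul, Matrix.transpose_mul]
        congr 1
        · rw [Matrix.mul_assoc]
        · rw [Matrix.mul_assoc, Matrix.mul_assoc, Matrix.trace_mul_comm,
            Matrix.mul_assoc, Matrix.mul_assoc]
      rw [Matrix.mul_sub, Matrix.trace_sub, ← h4, hker W]
    have hN : Gᵀ * Λ = Hᵀ * (Λ * Ecᵀ) := by
      rw [← sub_eq_zero]
      set N := Gᵀ * Λ - Hᵀ * (Λ * Ecᵀ) with hNdef
      ext k l
      have h5 := htr (Matrix.single k l 1)
      have h6 : Matrix.trace ((Matrix.single k l (1:ℂ))ᵀ * N) = N k l := by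
        simp [Matrix.trace, Matrix.diag, Matrix.mul_apply, Matrix.single, ite_and]
      rw [h6] at h5
      simpa using h5
    -- the generalized eigenvector argument shows Λ = 0
    have hvanish : ∀ (μ : ℂ) (k : ℕ) (v : Fin q → ℂ),
        ((f - μ • 1) ^ k) v = 0 → Λ *ᵥ v = 0 := by
      intro μ k
      induction k with
      | zero =>
        intro v hv
        simp only [pow_zero, Module.End.one_apply] at hv
        rw [hv, Matrix.mulVec_zero]
      | succ k ih =>
        intro v hv
        by_cases hv0 : v = 0
        · rw [hv0, Matrix.mulVec_zero]
        · have hμspec : μ ∈ spectrum ℂ Ec := by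
            apply hspec
            apply Module.End.hasEigenvalue_of_hasGenEigenvalue (k := k + 1)
            rw [Module.End.hasGenEigenvalue_iff]
            intro hbot
            apply hv0
            have hmem : v ∈ Module.End.genEigenspace f μ (k + 1 : ℕ) := by
              rw [Module.End.mem_genEigenspace_nat, LinearMap.mem_ker]
              exact hv
            rw [hbot, Submodule.mem_bot] at hmem
            exact hmem
          have hw : ((f - μ • 1) ^ k) ((f - μ • 1) v) = 0 := by
            rw [← Module.End.mul_apply, ← pow_succ]
            exact hv
          have hΛw : Λ *ᵥ ((f - μ • 1) v) = 0 := ih _ hw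
          have hmat : (G - μ • H)ᵀ * Λ = (Hᵀ * Λ) * (Ecᵀ - μ • 1) := by
            rw [Matrix.transpose_sub, Matrix.transpose_smul, Matrix.sub_mul,
              Matrix.smul_mul, hN, Matrix.mul_sub, Matrix.mul_smul, Matrix.mul_one,
              Matrix.mul_assoc]
          have h8 : (Ecᵀ - μ • (1 : Matrix (Fin q) (Fin q) ℂ)) *ᵥ v = (f - μ • 1) v := by
            rw [Matrix.sub_mulVec, LinearMap.sub_apply, LinearMap.smul_apply,
              Module.End.one_apply, hf]
            congr 1
            rw [Matrix.smul_mulVec, Matrix.one_mulVec]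
          have key : (G - μ • H)ᵀ *ᵥ (Λ *ᵥ v) = 0 := by
            rw [Matrix.mulVec_mulVec, hmat, ← Matrix.mulVec_mulVec, h8,
              ← Matrix.mulVec_mulVec, hΛw, Matrix.mulVec_zero]
          have hrk := hrank μ hμspec
          rw [← hGH μ] at hrk
          exact injLemma (G - μ • H) hrk (Λ *ᵥ v) key
    have hΛ0 : Λ = 0 := by
      have hker' : ∀ v : Fin q → ℂ, Λ *ᵥ v = 0 := by
        intro v
        have hv : v ∈ (⊤ : Submodule ℂ (Fin q → ℂ)) := Submodule.mem_top
        rw [← Module.End.iSup_maxGenEigenspace_eq_top f] at hv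
        refine Submodule.iSup_induction _ (motive := fun x => Λ *ᵥ x = 0) hv
          (fun μ x hx => ?_) (Matrix.mulVec_zero Λ)
          (fun x y hx hy => by show Λ *ᵥ (x + y) = 0; rw [Matrix.mulVec_add, hx, hy, add_zero])
        rw [Module.End.mem_maxGenEigenspace] at hx
        obtain ⟨k, hk⟩ := hx
        exact hvanish μ k x hk
      ext i j
      have h9 := congrFun (hker' (Pi.single j 1)) i
      simpa [Matrix.mulVec, dotProduct, Pi.single_apply] using h9
    apply LinearMap.ext
    intro M
    rw [hφrep M, hΛ0, Matrix.mul_zero, Matrix.trace_zero, LinearMap.zero_apply]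
  -- apply surjectivity to the target
  set Rt : Matrix (Fin n ⊕ Fin p) (Fin q) ℂ :=
    Matrix.of (fun i j => Sum.elim (fun a => -((D a j : ℝ) : ℂ))
      (fun b => -((F b j : ℝ) : ℂ)) i) with hRtdef
  obtain ⟨W, hW⟩ := hsurj Rt
  rw [hΦapp] at hW
  refine ⟨Matrix.of (fun i j => (W (Sum.inl i) j).re),
    Matrix.of (fun i j => (W (Sum.inr i) j).re), ?_, ?_⟩
  · ext i j
    have h1 : (G * W - H * (W * Ec)) (Sum.inl i) j = Rt (Sum.inl i) j := by
      rw [hW]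
    have e1 : (G * W) (Sum.inl i) j
        = (∑ a, Ac i a * W (Sum.inl a) j) + (∑ b, Bc i b * W (Sum.inr b) j) := by
      rw [Matrix.mul_apply, Fintype.sum_sum_type]
      rfl
    have e2 : (H * (W * Ec)) (Sum.inl i) j = ∑ k, W (Sum.inl i) k * Ec k j := by
      rw [Matrix.mul_apply, Fintype.sum_sum_type]
      simp [hHdef, Matrix.one_apply, ite_mul, Finset.sum_ite_eq, Matrix.mul_apply]
    rw [Matrix.sub_apply, e1, e2] at h1
    have h2 : Rt (Sum.inl i) j = -((D i j : ℝ) : ℂ) := rfl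
    rw [h2] at h1
    have h3 := congrArg Complex.re h1
    simp only [Complex.sub_re, Complex.add_re, Complex.neg_re, Complex.ofReal_re,
      Complex.re_sum, hAcdef, hBcdef, hEcdef, Matrix.map_apply, Complex.mul_re,
      Complex.ofReal_im, mul_zero, zero_mul, sub_zero] at h3
    simp only [Matrix.mul_apply, Matrix.add_apply, Matrix.of_apply]
    linarith [h3]
  · ext i j
    have h1 : (G * W - H * (W * Ec)) (Sum.inr i) j = Rt (Sum.inr i) j := by
      rw [hW]
    have e1 : (G * W) (Sum.inr i) j = ∑ a, Cc i a * W (Sum.inl a) j := by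
      rw [Matrix.mul_apply, Fintype.sum_sum_type]
      simp [hGdef]
    have e2 : (H * (W * Ec)) (Sum.inr i) j = 0 := by
      rw [Matrix.mul_apply, Fintype.sum_sum_type]
      simp [hHdef]
    rw [Matrix.sub_apply, e1, e2] at h1
    have h2 : Rt (Sum.inr i) j = -((F i j : ℝ) : ℂ) := rfl
    rw [h2] at h1
    have h3 := congrArg Complex.re h1
    simp only [Complex.sub_re, Complex.neg_re, Complex.ofReal_re, Complex.re_sum,
      hCcdef, Matrix.map_apply, Complex.mul_re, Complex.ofReal_im, mul_zero,
      zero_mul, sub_zero, Complex.zero_re] at h3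
    simp only [Matrix.add_apply, Matrix.mul_apply, Matrix.of_apply, Matrix.zero_apply]
    linarith [h3]
end
end
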